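/- arXiv:2004.07238 — 2 statements merged into one kernel-verified Lean document; each statement's English description precedes it below -/
import Mathlib

section
/- Let K₀ ⊆ K be fields, V a K-vector space, M ⊆ V a K₀-subspace, and e₀, e₁ ∈ V vectors such that M ∪ {e₀, e₁} is K₀-linearly independent in the sense that e₀, e₁ are linearly independent over the K-span of M. Let t, t' ∈ K with t ∉ K₀ and t' ∉ K₀, and set f = t·e₀ + t'·e₁. Then the K₀-span of M ∪ {e₀,e₁} intersected with the K₀-span of M ∪ {f} equals the K₀-span of M. -/
/-- Example: if `e₀, e₁` are linearly independent over `span_K M` and `t, t' ∉ K₀`,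
then with `f = t•e₀ + t'•e₁` we have
`span_{K₀}(M ∪ {e₀,e₁}) ∩ span_{K₀}(M ∪ {f}) = span_{K₀} M`. -/
theorem span_inter_eq_of_irrational_combination
    {K₀ K V : Type*} [Field K₀] [Field K] [Algebra K₀ K]
    [AddCommGroup V] [Module K₀ V] [Module K V] [IsScalarTower K₀ K V]
    (M : Set V) (e₀ e₁ : V)
    (hindep : ∀ c₀ c₁ : K, ∀ m ∈ Submodule.span K M,
      c₀ • e₀ + c₁ • e₁ + m = 0 → c₀ = 0 ∧ c₁ = 0 ∧ m = 0)
    (t t' : K) (ht : t ∉ Set.range (algebraMap K₀ K))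
    (ht' : t' ∉ Set.range (algebraMap K₀ K)) :
    Submodule.span K₀ (M ∪ {e₀, e₁}) ⊓ Submodule.span K₀ (M ∪ {t • e₀ + t' • e₁}) =
      Submodule.span K₀ M := by
  have hset1 : M ∪ {e₀, e₁} = insert e₀ (insert e₁ M) := by
    ext x; simp [Set.mem_union, Set.mem_insert_iff]
  have hset2 : M ∪ {t • e₀ + t' • e₁} = insert (t • e₀ + t' • e₁) M := by
    ext x; simp [Set.mem_union, Set.mem_insert_iff]
  have hM : Submodule.span K₀ M ≤
      (Submodule.span K M).restrictScalars K₀ := by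
    rw [Submodule.span_le]
    exact Submodule.subset_span
  apply le_antisymm
  · intro x hx
    rw [Submodule.mem_inf] at hx
    obtain ⟨hx1, hx2⟩ := hx
    rw [hset1, Submodule.mem_span_insert] at hx1
    obtain ⟨c₀, y, hy, rfl⟩ := hx1
    rw [Submodule.mem_span_insert] at hy
    obtain ⟨c₁, m₁, hm₁, rfl⟩ := hy
    rw [hset2, Submodule.mem_span_insert] at hx2
    obtain ⟨b, m₂, hm₂, heq⟩ := hx2
    -- rewrite K₀-scalars as K-scalars
    have hc₀ : c₀ • e₀ = (algebraMap K₀ K c₀) • e₀ := (algebraMap_smul K c₀ e₀).symm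
    have hc₁ : c₁ • e₁ = (algebraMap K₀ K c₁) • e₁ := (algebraMap_smul K c₁ e₁).symm
    have hb : b • (t • e₀ + t' • e₁) =
        ((algebraMap K₀ K b) * t) • e₀ + ((algebraMap K₀ K b) * t') • e₁ := by
      rw [smul_add, mul_smul, mul_smul, algebraMap_smul, algebraMap_smul]
    have hkey : (algebraMap K₀ K c₀ - algebraMap K₀ K b * t) • e₀ +
        (algebraMap K₀ K c₁ - algebraMap K₀ K b * t') • e₁ + (m₁ - m₂) = 0 := by
      have := heq
      rw [hb] at this
      rw [sub_smul, sub_smul]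
      rw [hc₀, hc₁] at this
      abel_nf
      abel_nf at this
      linear_combination (norm := module) this
    have hm₁K : m₁ ∈ Submodule.span K M := hM hm₁
    have hm₂K : m₂ ∈ Submodule.span K M := hM hm₂
    obtain ⟨h1, h2, h3⟩ := hindep _ _ _ (Submodule.sub_mem _ hm₁K hm₂K) hkey
    have hb0 : b = 0 := by
      by_contra hb0
      apply ht
      refine ⟨c₀ / b, ?_⟩
      have hbK : algebraMap K₀ K b ≠ 0 := by
        simpa using hb0
      rw [map_div₀]
      field_simp
      linear_combination sub_eq_zero.mp h1
    have hc₀0 : c₀ = 0 := by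
      have : algebraMap K₀ K c₀ = 0 := by
        rw [hb0] at h1; simpa using h1
      exact (map_eq_zero _).mp this
    have hc₁0 : c₁ = 0 := by
      have : algebraMap K₀ K c₁ = 0 := by
        rw [hb0] at h2; simpa using h2
      exact (map_eq_zero _).mp this
    rw [hc₀0, hc₁0]
    simpa using hm₁
  · refine le_inf ?_ ?_ <;> exact Submodule.span_mono (Set.subset_union_left)
end

section
/- Let V be a vector space over a field K, and let A, B, C be subsets of V with B ⊆ A ∩ C (as spans: span(B) ⊆ span(A), span(B) ⊆ span(C)). Suppose a₁,…,a_d ∈ A are linearly independent over span(B ∪ C) and every element of A lies in span(B ∪ C ∪ {a₁,…,a_d}) and also every element of A lies in span(B ∪ {a₁,…,a_d}). Then span(A ∪ B) ∩ span(B ∪ C) = span(B). -/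
/-- If `a₁,…,a_d ∈ A` is simultaneously a maximal subfamily of `A` linearly independent
over `span(B ∪ C)` and over `span B`, then `span(A ∪ B) ∩ span(B ∪ C) = span B`. -/
theorem span_inter_eq_span_base {K V : Type*} [Field K] [AddCommGroup V] [Module K V]
    (A B C : Set V)
    (hBA : Submodule.span K B ≤ Submodule.span K A)
    (hBC : Submodule.span K B ≤ Submodule.span K C)
    {d : ℕ} (a : Fin d → V) (haA : ∀ i, a i ∈ A)
    (hindep : ∀ c : Fin d → K,
      (∑ i, c i • a i) ∈ Submodule.span K (B ∪ C) → ∀ i, c i = 0)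
    (hmaxBC : ∀ x ∈ A, x ∈ Submodule.span K (B ∪ C ∪ Set.range a))
    (hmaxB : ∀ x ∈ A, x ∈ Submodule.span K (B ∪ Set.range a)) :
    Submodule.span K (A ∪ B) ⊓ Submodule.span K (B ∪ C) = Submodule.span K B := by
  apply le_antisymm
  · rintro x ⟨hx1, hx2⟩
    have hAB : Submodule.span K (A ∪ B) ≤
        Submodule.span K B ⊔ Submodule.span K (Set.range a) := by
      rw [← Submodule.span_union]
      apply Submodule.span_le.2
      rintro y (hy | hy)
      · exact hmaxB y hy
      · exact Submodule.subset_span (Set.mem_union_left _ hy)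
    obtain ⟨y, hy, z, hz, rfl⟩ := Submodule.mem_sup.1 (hAB hx1)
    obtain ⟨c, rfl⟩ := (Submodule.mem_span_range_iff_exists_fun K).1 hz
    have hsum : (∑ i, c i • a i) ∈ Submodule.span K (B ∪ C) := by
      have hyBC : y ∈ Submodule.span K (B ∪ C) :=
        Submodule.span_mono Set.subset_union_left hy
      have := Submodule.sub_mem _ hx2 hyBC
      simpa using this
    have hc := hindep c hsum
    have : (∑ i, c i • a i) = 0 := by
      simp [hc]
    simpa [this] using hy
  · exact le_inf (Submodule.span_mono Set.subset_union_right)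
      (Submodule.span_mono Set.subset_union_left)
end
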